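/- Let x₁,…,x_N be nonnegative reals with sum 1, N ≥ 2. Equality ∑ᵢ η(xᵢ) = log(N)·√(2N/(N-1))·√(∑_{i<j} xᵢxⱼ) holds if and only if either exactly one xᵢ equals 1 and the rest are 0, or all xᵢ equal 1/N. -/

import Mathlib

open Finset Real Set

noncomputable def gf (x : ℝ) : ℝ := x * (Real.log x)^2 / (1 - x)

noncomputable def gf1 (x : ℝ) : ℝ := ((Real.log x)^2 + 2 * Real.log x * (1 - x)) / (1 - x)^2
noncomputable def gf2 (x : ℝ) : ℝ :=
  2 * (Real.log x - x + 1) * (x * Real.log x - x + 1) / (x * (1 - x)^3)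

lemma hasDerivAt_gf {x : ℝ} (hx : x ∈ Set.Ioo (0:ℝ) 1) : HasDerivAt gf (gf1 x) x := by
  obtain ⟨h0, h1⟩ := hx
  have hne : (1 : ℝ) - x ≠ 0 := by linarith
  have hu : HasDerivAt (fun y : ℝ => y * (Real.log y)^2)
      ((Real.log x)^2 + x * (2 * Real.log x * (1/x))) x := by
    have hl : HasDerivAt (fun y : ℝ => (Real.log y)^2) (2 * Real.log x * (1/x)) x := by
      have := ((Real.hasDerivAt_log (ne_of_gt h0)).fun_pow 2)
      simpa [one_div, mul_comm, mul_assoc, mul_left_comm] using this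
    simpa using (hasDerivAt_id x).fun_mul hl
  have hv : HasDerivAt (fun y : ℝ => 1 - y) (-1) x := by
    simpa using (hasDerivAt_id x).const_sub 1
  have := hu.fun_div hv hne
  convert this using 1 <;> try with_unfolding_all rfl
  unfold gf1
  field_simp
  ring
lemma hasDerivAt_gf1 {x : ℝ} (hx : x ∈ Set.Ioo (0:ℝ) 1) : HasDerivAt gf1 (gf2 x) x := by
  obtain ⟨h0, h1⟩ := hx
  have hne : (1 : ℝ) - x ≠ 0 := by linarith
  have hx0 : x ≠ 0 := ne_of_gt h0
  have hl := Real.hasDerivAt_log hx0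
  have hu : HasDerivAt (fun y : ℝ => (Real.log y)^2 + 2 * Real.log y * (1 - y))
      (2 * Real.log x * (1/x) + (2 * (1/x) * (1 - x) + 2 * Real.log x * (-1))) x := by
    have h2 : HasDerivAt (fun y : ℝ => (Real.log y)^2) (2 * Real.log x * (1/x)) x := by
      have := hl.fun_pow 2
      simpa [one_div, mul_comm, mul_assoc, mul_left_comm] using this
    have h3 : HasDerivAt (fun y : ℝ => 2 * Real.log y * (1 - y))
        (2 * (1/x) * (1 - x) + 2 * Real.log x * (-1)) x := by
      have ha : HasDerivAt (fun y : ℝ => 2 * Real.log y) (2 * (1/x)) x := by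
        simpa [one_div] using hl.const_mul 2
      have hb : HasDerivAt (fun y : ℝ => 1 - y) (-1) x := by
        simpa using (hasDerivAt_id x).const_sub 1
      exact ha.mul hb
    exact h2.add h3
  have hv : HasDerivAt (fun y : ℝ => (1 - y)^2) (2 * (1 - x) * (-1)) x := by
    have hb : HasDerivAt (fun y : ℝ => 1 - y) (-1) x := by
      simpa using (hasDerivAt_id x).const_sub 1
    have := hb.fun_pow 2
    simpa [mul_comm, mul_assoc] using this
  have hne2 : ((1 : ℝ) - x)^2 ≠ 0 := pow_ne_zero _ hne
  have := hu.fun_div hv hne2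
  convert this using 1 <;> try with_unfolding_all rfl
  unfold gf2
  field_simp
  ring
lemma gf2_neg {x : ℝ} (hx : x ∈ Set.Ioo (0:ℝ) 1) : gf2 x < 0 := by
  obtain ⟨h0, h1⟩ := hx
  have hA : Real.log x - x + 1 < 0 := by
    have := Real.log_lt_sub_one_of_pos h0 (ne_of_lt h1)
    linarith
  have hB : 0 < x * Real.log x - x + 1 := by
    have hinv : Real.log x⁻¹ < x⁻¹ - 1 :=
      Real.log_lt_sub_one_of_pos (by positivity) (by
        intro h; exact (ne_of_lt h1) (by field_simp at h; linarith))
    rw [Real.log_inv] at hinv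
    have h2 : x * (-Real.log x) < x * (x⁻¹ - 1) := mul_lt_mul_of_pos_left hinv h0
    rw [mul_sub, mul_inv_cancel₀ (ne_of_gt h0)] at h2
    linarith
  have hD : 0 < x * (1 - x)^3 := by
    have h2 : (0:ℝ) < 1 - x := by linarith
    positivity
  unfold gf2
  apply div_neg_of_neg_of_pos _ hD
  nlinarith
lemma gf_strictConcave : StrictConcaveOn ℝ (Set.Ico (0:ℝ) 1) gf := by
  have hint : interior (Set.Ico (0:ℝ) 1) = Set.Ioo (0:ℝ) 1 := interior_Ico
  apply strictConcaveOn_of_deriv2_neg (convex_Ico 0 1)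
  · -- continuity
    have hcont : ContinuousOn (fun x : ℝ => 4 * (Real.sqrt x * Real.log (Real.sqrt x))^2 / (1 - x))
        (Set.Ico (0:ℝ) 1) := by
      apply ContinuousOn.div
      · exact (continuous_const.mul ((Real.continuous_mul_log.comp Real.continuous_sqrt).pow 2)).continuousOn
      · exact (continuous_const.sub continuous_id).continuousOn
      · intro y hy; simp only [Set.mem_Ico] at hy; intro h; linarith [hy.2]
    apply hcont.congr
    intro y hy
    simp only [Set.mem_Ico] at hy
    unfold gf
    dsimp only
    rw [Real.log_sqrt hy.1]
    rw [mul_pow, Real.sq_sqrt hy.1]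
    ring
  · intro y hy
    rw [hint] at hy
    have h1 : deriv gf =ᶠ[nhds y] gf1 := by
      filter_upwards [isOpen_Ioo.mem_nhds hy] with z hz
      exact (hasDerivAt_gf hz).deriv
    have : deriv^[2] gf y = deriv gf1 y := by
      simp only [Function.iterate_succ, Function.iterate_zero, Function.comp]
      exact Filter.EventuallyEq.deriv_eq h1
    rw [this, (hasDerivAt_gf1 hy).deriv]
    exact gf2_neg hy

lemma pair_sum_identity (N : ℕ) (x : Fin N → ℝ) :
    2 * ∑ p ∈ Finset.univ.filter (fun p : Fin N × Fin N => p.1 < p.2), x p.1 * x p.2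
      = (∑ i, x i)^2 - ∑ i, (x i)^2 := by
  have hswap : ∑ p ∈ Finset.univ.filter (fun p : Fin N × Fin N => p.2 < p.1), x p.1 * x p.2
      = ∑ p ∈ Finset.univ.filter (fun p : Fin N × Fin N => p.1 < p.2), x p.1 * x p.2 := by
    apply Finset.sum_nbij' (fun p => Prod.swap p) (fun p => Prod.swap p) <;>
      simp [mul_comm]
  have hdiag : ∑ p ∈ Finset.univ.filter (fun p : Fin N × Fin N => p.1 = p.2), x p.1 * x p.2
      = ∑ i, (x i)^2 := by
    apply Finset.sum_nbij' (fun p => p.1) (fun i => (i, i)) <;> simp [sq]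
  have htot : ∑ p : Fin N × Fin N, x p.1 * x p.2 = (∑ i, x i)^2 := by
    rw [Fintype.sum_prod_type, sq]
    rw [Finset.sum_mul_sum]
  have hsplit1 := Finset.sum_filter_add_sum_filter_not Finset.univ
    (fun p : Fin N × Fin N => p.1 = p.2) (fun p => x p.1 * x p.2)
  have hsplit2 := Finset.sum_filter_add_sum_filter_not
    (Finset.univ.filter (fun p : Fin N × Fin N => ¬ p.1 = p.2))
    (fun p : Fin N × Fin N => p.1 < p.2) (fun p => x p.1 * x p.2)
  rw [Finset.filter_filter, Finset.filter_filter] at hsplit2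
  have e1 : Finset.univ.filter (fun p : Fin N × Fin N => ¬ p.1 = p.2 ∧ p.1 < p.2)
      = Finset.univ.filter (fun p : Fin N × Fin N => p.1 < p.2) := by
    apply Finset.filter_congr; intro p _; constructor
    · rintro ⟨_, h⟩; exact h
    · intro h; exact ⟨ne_of_lt h, h⟩
  have e2 : Finset.univ.filter (fun p : Fin N × Fin N => ¬ p.1 = p.2 ∧ ¬ p.1 < p.2)
      = Finset.univ.filter (fun p : Fin N × Fin N => p.2 < p.1) := by
    apply Finset.filter_congr; intro p _; constructor
    · rintro ⟨h1, h2⟩; exact lt_of_le_of_ne (not_lt.mp h2) (fun h => h1 h.symm)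
    · intro h; exact ⟨(ne_of_lt h).symm, not_lt.mpr h.le⟩
  rw [e1, e2, hswap] at hsplit2
  rw [hdiag] at hsplit1
  rw [htot] at hsplit1
  linarith [hsplit1, hsplit2]


theorem entropy_eq_cN_sqrt_e2_iff (N : ℕ) (hN : 2 ≤ N) (x : Fin N → ℝ)
    (hx : ∀ i, 0 ≤ x i) (hsum : ∑ i, x i = 1) :
    (∑ i, (-x i * Real.log (x i)) =
      Real.log N * Real.sqrt (2 * N / (N - 1)) *
        Real.sqrt (∑ p ∈ Finset.univ.filter (fun p : Fin N × Fin N => p.1 < p.2),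
          x p.1 * x p.2)) ↔
    ((∃ i, x i = 1 ∧ ∀ j, j ≠ i → x j = 0) ∨ (∀ i, x i = 1 / N)) := by
  have hN2 : (2:ℝ) ≤ (N:ℝ) := by exact_mod_cast hN
  have hNpos : (0:ℝ) < (N:ℝ) := by linarith
  have hN1 : (0:ℝ) < (N:ℝ) - 1 := by linarith
  have hNne : (N:ℝ) ≠ 0 := ne_of_gt hNpos
  set E2 := ∑ p ∈ Finset.univ.filter (fun p : Fin N × Fin N => p.1 < p.2),
      x p.1 * x p.2 with hE2def
  have hkey : 2 * E2 = 1 - ∑ i, (x i)^2 := by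
    rw [hE2def, pair_sum_identity, hsum, one_pow]
  have hE2nonneg : 0 ≤ E2 := by
    apply Finset.sum_nonneg; intro p _; exact mul_nonneg (hx _) (hx _)
  have hxle1 : ∀ i, x i ≤ 1 := by
    intro i
    calc x i ≤ ∑ j, x j := Finset.single_le_sum (fun j _ => hx j) (Finset.mem_univ i)
    _ = 1 := hsum
  have hpureE2 : ∀ i, x i = 1 → (∀ j, j ≠ i → x j = 0) ∧ E2 = 0 := by
    intro i hi
    have hzero : ∀ j, j ≠ i → x j = 0 := by
      have hrest : ∑ j ∈ Finset.univ.erase i, x j = 0 := by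
        have := Finset.add_sum_erase Finset.univ x (Finset.mem_univ i)
        rw [hsum] at this; linarith [this, hi]
      intro j hj
      have := (Finset.sum_eq_zero_iff_of_nonneg (fun k _ => hx k)).mp hrest j
        (Finset.mem_erase.mpr ⟨hj, Finset.mem_univ j⟩)
      exact this
    refine ⟨hzero, ?_⟩
    rw [hE2def]
    apply Finset.sum_eq_zero
    intro p hp
    have hlt : p.1 < p.2 := (Finset.mem_filter.mp hp).2
    by_cases hp1 : p.1 = i
    · have : p.2 ≠ i := by rw [← hp1]; exact (ne_of_lt hlt).symm
      rw [hzero p.2 this, mul_zero]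
    · rw [hzero p.1 hp1, zero_mul]
  constructor
  · -- forward
    intro hEq
    by_cases hE2z : E2 = 0
    · left
      have hsq : ∑ i, (x i)^2 = 1 := by rw [hE2z] at hkey; linarith
      have hzz : ∑ i, x i * (1 - x i) = 0 := by
        have : ∑ i, x i * (1 - x i) = ∑ i, x i - ∑ i, (x i)^2 := by
          rw [← Finset.sum_sub_distrib]; apply Finset.sum_congr rfl; intro i _; ring
        rw [this, hsum, hsq]; ring
      have hall : ∀ i, x i = 0 ∨ x i = 1 := by
        intro i
        have := (Finset.sum_eq_zero_iff_of_nonneg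
          (fun j _ => mul_nonneg (hx j) (by linarith [hxle1 j]))).mp hzz i (Finset.mem_univ i)
        rcases mul_eq_zero.mp this with h | h
        · exact Or.inl h
        · right; linarith
      have hex : ∃ i, x i = 1 := by
        by_contra h
        push_neg at h
        have : ∀ i ∈ Finset.univ, x i = 0 := by
          intro i _; rcases hall i with h0 | h1
          · exact h0
          · exact absurd h1 (h i)
        rw [Finset.sum_eq_zero this] at hsum; norm_num at hsum
      obtain ⟨i, hi⟩ := hex
      exact ⟨i, hi, (hpureE2 i hi).1⟩
    · right
      have hE2pos : 0 < E2 := lt_of_le_of_ne hE2nonneg (Ne.symm hE2z)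
      have hxlt1 : ∀ i, x i < 1 := by
        intro i
        rcases lt_or_eq_of_le (hxle1 i) with h | h
        · exact h
        · exact absurd (hpureE2 i h).2 hE2z
      set a : Fin N → ℝ := fun i => Real.sqrt (x i * (1 - x i)) with ha
      set b : Fin N → ℝ := fun i => Real.sqrt (x i / (1 - x i)) * (-Real.log (x i)) with hb
      have hab : ∀ i, a i * b i = -x i * Real.log (x i) := by
        intro i
        have h1 : (0:ℝ) < 1 - x i := by linarith [hxlt1 i]
        rw [ha, hb]
        dsimp only
        rw [show Real.sqrt (x i * (1 - x i)) * (Real.sqrt (x i / (1 - x i)) * (-Real.log (x i)))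
            = Real.sqrt ((x i * (1 - x i)) * (x i / (1 - x i))) * (-Real.log (x i)) by
          rw [Real.sqrt_mul (mul_nonneg (hx i) h1.le)]
          ring]
        have : (x i * (1 - x i)) * (x i / (1 - x i)) = (x i)^2 := by
          field_simp
        rw [this, Real.sqrt_sq (hx i)]
        ring
      have ha2 : ∀ i, a i ^ 2 = x i * (1 - x i) := by
        intro i
        exact Real.sq_sqrt (mul_nonneg (hx i) (by linarith [hxlt1 i]))
      have hb2 : ∀ i, b i ^ 2 = gf (x i) := by
        intro i
        have h1 : (0:ℝ) < 1 - x i := by linarith [hxlt1 i]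
        rw [hb]
        dsimp only
        rw [mul_pow, Real.sq_sqrt (div_nonneg (hx i) h1.le)]
        unfold gf
        rw [neg_sq]
        field_simp
      have hCS := Finset.sum_mul_sq_le_sq_mul_sq Finset.univ a b
      rw [Finset.sum_congr rfl (fun i _ => hab i),
          Finset.sum_congr rfl (fun i _ => ha2 i),
          Finset.sum_congr rfl (fun i _ => hb2 i)] at hCS
      have hsxx : ∑ i, x i * (1 - x i) = 2 * E2 := by
        have : ∑ i, x i * (1 - x i) = ∑ i, x i - ∑ i, (x i)^2 := by
          rw [← Finset.sum_sub_distrib]; apply Finset.sum_congr rfl; intro i _; ring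
        rw [this, hsum]; linarith
      rw [hsxx] at hCS
      set T := ∑ i, gf (x i) with hT
      -- square of the equality
      have hSsq : (∑ i, (-x i * Real.log (x i)))^2
          = (Real.log N)^2 * (2 * N / ((N:ℝ) - 1)) * E2 := by
        rw [hEq]
        rw [mul_pow, mul_pow, Real.sq_sqrt (by positivity), Real.sq_sqrt hE2nonneg]
      rw [hSsq] at hCS
      have hTB : (Real.log N)^2 * ((N:ℝ) / ((N:ℝ) - 1)) ≤ T := by
        have h2 : (Real.log N)^2 * (2 * (N:ℝ) / ((N:ℝ) - 1)) * E2
            = ((Real.log N)^2 * ((N:ℝ) / ((N:ℝ) - 1))) * (2 * E2) := by ring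
        rw [h2] at hCS
        have := le_of_mul_le_mul_right (by linarith [hCS] :
          ((Real.log N)^2 * ((N:ℝ) / ((N:ℝ) - 1))) * (2 * E2) ≤ T * (2 * E2)) (by linarith)
        exact this
      -- strict Jensen
      by_contra hne
      push_neg at hne
      obtain ⟨i0, hi0⟩ := hne
      have hpne : ∃ j ∈ Finset.univ, ∃ k ∈ Finset.univ, x j ≠ (x k : ℝ) := by
        by_contra h
        push_neg at h
        have hconst : ∀ j, x j = x i0 := fun j =>
          h j (Finset.mem_univ j) i0 (Finset.mem_univ i0)
        have : ∑ i, x i = (N:ℝ) * x i0 := by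
          rw [Finset.sum_congr rfl (fun j _ => hconst j)]
          simp [Finset.card_univ, mul_comm]
        rw [hsum] at this
        apply hi0
        field_simp at this ⊢
        linarith
      have hJ := gf_strictConcave.lt_map_sum (t := Finset.univ)
        (w := fun _ : Fin N => 1 / (N:ℝ)) (p := x)
        (fun i _ => by positivity)
        (by simp [Finset.card_univ]; field_simp)
        (fun i _ => ⟨hx i, hxlt1 i⟩) hpne
      simp only [smul_eq_mul] at hJ
      rw [← Finset.mul_sum, ← Finset.mul_sum, hsum, mul_one] at hJ
      have hgf : gf (1 / (N:ℝ)) = (Real.log N)^2 / ((N:ℝ) - 1) := by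
        unfold gf
        rw [one_div, Real.log_inv, neg_sq]
        field_simp
      rw [hgf] at hJ
      -- hJ : 1/N * T < (log N)^2 / (N-1)
      have hcontra : T < (Real.log N)^2 * ((N:ℝ) / ((N:ℝ) - 1)) := by
        have h3 : T < (N:ℝ) * ((Real.log N)^2 / ((N:ℝ) - 1)) := by
          have := mul_lt_mul_of_pos_left hJ hNpos
          rw [← mul_assoc, mul_one_div, div_self hNne, one_mul] at this
          exact this
        calc T < (N:ℝ) * ((Real.log N)^2 / ((N:ℝ) - 1)) := h3
        _ = (Real.log N)^2 * ((N:ℝ) / ((N:ℝ) - 1)) := by ring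
      linarith
  · -- reverse
    rintro (⟨i, hi1, hi0⟩ | hunif)
    · have hE2z : E2 = 0 := (hpureE2 i hi1).2
      have hS : ∑ j, (-x j * Real.log (x j)) = 0 := by
        apply Finset.sum_eq_zero
        intro j _
        by_cases hj : j = i
        · rw [hj, hi1]; simp
        · rw [hi0 j hj]; simp
      rw [hS, hE2z]
      simp
    · have hsq : ∑ i, (x i)^2 = 1 / (N:ℝ) := by
        rw [Finset.sum_congr rfl (fun i _ => by rw [hunif i])]
        simp [Finset.card_univ]
        field_simp
      have hE2v : E2 = (1 - 1/(N:ℝ)) / 2 := by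
        rw [hsq] at hkey; linarith
      have hS : ∑ i, (-x i * Real.log (x i)) = Real.log N := by
        rw [Finset.sum_congr rfl (fun i _ => by rw [hunif i])]
        rw [one_div, Real.log_inv]
        simp [Finset.card_univ]
        field_simp
      rw [hS, hE2v, mul_assoc, ← Real.sqrt_mul (by positivity : (0:ℝ) ≤ 2 * (N:ℝ) / ((N:ℝ) - 1))]
      rw [show 2 * (N:ℝ) / ((N:ℝ) - 1) * ((1 - 1/(N:ℝ)) / 2) = 1 by
        field_simp]
      simp
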